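/- (Stationary-distribution correctness, one-dimensional case of Corollary, part ii.) For every fixed θ, θ_s ∈ ℝ, the WOU conditional density converges pointwise to the stationary wrapped normal density as time tends to infinity: p_t(θ | θ_s) → f_WN(θ; μ, v∞) as t → ∞. -/

import Mathlib

open MeasureTheory Real

/-- Centered Gaussian density with variance `v` on `ℝ`. -/
noncomputable def gaussDens (v x : ℝ) : ℝ :=
  (Real.sqrt (2 * Real.pi * v))⁻¹ * Real.exp (-(x ^ 2) / (2 * v))

/-- Wrapped normal density `f_WN(θ; μ, v)`. -/
noncomputable def fWN (μ v θ : ℝ) : ℝ :=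
  ∑' k : ℤ, gaussDens v (θ - μ + 2 * (k : ℝ) * Real.pi)

/-- Winding-number weights `w_k(θ)` with stationary variance `v∞ = σ²/(2α)`. -/
noncomputable def wnWeight (α μ σ : ℝ) (k : ℤ) (θ : ℝ) : ℝ :=
  gaussDens (σ ^ 2 / (2 * α)) (θ - μ + 2 * (k : ℝ) * Real.pi) / fWN μ (σ ^ 2 / (2 * α)) θ

/-- Conditional mean `μ_t^m(θ_s) = μ + e^{−αt}(θ_s − μ + 2mπ)`. -/
noncomputable def wouMean (α μ : ℝ) (t : ℝ) (m : ℤ) (θs : ℝ) : ℝ :=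
  μ + Real.exp (-(α * t)) * (θs - μ + 2 * (m : ℝ) * Real.pi)

/-- Conditional variance `γ_t = σ²(1 − e^{−2αt})/(2α)`. -/
noncomputable def wouVar (α σ t : ℝ) : ℝ :=
  σ ^ 2 * (1 - Real.exp (-(2 * α * t))) / (2 * α)

/-- The WOU conditional density `p_t(θ | θ_s)`. -/
noncomputable def pWOU (α μ σ t θ θs : ℝ) : ℝ :=
  ∑' m : ℤ, wnWeight α μ σ m θs * fWN (wouMean α μ t m θs) (wouVar α σ t) θ

open Filter

lemma gaussDens_nonneg (v x : ℝ) : 0 ≤ gaussDens v x := by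
  unfold gaussDens; positivity

lemma gaussDens_pos {v : ℝ} (hv : 0 < v) (x : ℝ) : 0 < gaussDens v x := by
  have h : 0 < Real.sqrt (2 * Real.pi * v) := Real.sqrt_pos.mpr (by positivity)
  unfold gaussDens; positivity

lemma summable_exp_neg_sq {c : ℝ} (hc : 0 < c) :
    Summable fun k : ℤ => Real.exp (-(c * (k : ℝ) ^ 2)) := by
  have key : Summable fun n : ℕ => Real.exp (-(c * (n : ℝ) ^ 2)) := by
    refine Summable.of_nonneg_of_le (fun n => (Real.exp_pos _).le) (fun n => ?_)
      (summable_geometric_of_lt_one (Real.exp_pos (-c)).le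
        (Real.exp_lt_one_iff.mpr (by linarith)))
    rw [← Real.exp_nat_mul]
    apply Real.exp_le_exp.mpr
    have hn : (n : ℝ) ≤ (n : ℝ) ^ 2 := by
      have := Nat.le_mul_self n
      have : (n : ℝ) ≤ (n : ℝ) * n := by exact_mod_cast this
      nlinarith
    nlinarith
  refine Summable.of_nat_of_neg ?_ ?_ <;> simpa using key

lemma gauss_term_le {a b v : ℝ} (ha : 0 < a) (hav : a ≤ v) (hvb : v ≤ b) (x : ℝ) (k : ℤ) :
    gaussDens v (x + 2 * (k : ℝ) * Real.pi) ≤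
      (Real.sqrt (2 * Real.pi * a))⁻¹ *
        (Real.exp (x ^ 2 / (2 * b)) * Real.exp (-(Real.pi ^ 2 / b * (k : ℝ) ^ 2))) := by
  have hv : 0 < v := ha.trans_le hav
  have hb : 0 < b := hv.trans_le hvb
  have hsq : 0 < Real.sqrt (2 * Real.pi * a) := Real.sqrt_pos.mpr (by positivity)
  unfold gaussDens
  have h1 : (Real.sqrt (2 * Real.pi * v))⁻¹ ≤ (Real.sqrt (2 * Real.pi * a))⁻¹ := by
    have hle : Real.sqrt (2 * Real.pi * a) ≤ Real.sqrt (2 * Real.pi * v) :=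
      Real.sqrt_le_sqrt (by nlinarith [Real.pi_pos])
    exact inv_anti₀ hsq hle
  have h2 : Real.exp (-((x + 2 * (k : ℝ) * Real.pi) ^ 2) / (2 * v)) ≤
      Real.exp (x ^ 2 / (2 * b)) * Real.exp (-(Real.pi ^ 2 / b * (k : ℝ) ^ 2)) := by
    rw [← Real.exp_add]
    apply Real.exp_le_exp.mpr
    have hy : 2 * Real.pi ^ 2 * (k : ℝ) ^ 2 - x ^ 2 ≤ (x + 2 * (k : ℝ) * Real.pi) ^ 2 := by
      nlinarith [sq_nonneg (x + (k : ℝ) * Real.pi)]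
    have step1 : -((x + 2 * (k : ℝ) * Real.pi) ^ 2) / (2 * v) ≤
        -((x + 2 * (k : ℝ) * Real.pi) ^ 2) / (2 * b) := by
      rw [neg_div, neg_div, neg_le_neg_iff]
      gcongr
    have step2 : -((x + 2 * (k : ℝ) * Real.pi) ^ 2) / (2 * b) ≤
        (x ^ 2 - 2 * Real.pi ^ 2 * (k : ℝ) ^ 2) / (2 * b) := by
      gcongr
      linarith
    have step3 : (x ^ 2 - 2 * Real.pi ^ 2 * (k : ℝ) ^ 2) / (2 * b) =
        x ^ 2 / (2 * b) + -(Real.pi ^ 2 / b * (k : ℝ) ^ 2) := by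
      field_simp; ring
    linarith
  calc (Real.sqrt (2 * Real.pi * v))⁻¹ * Real.exp (-((x + 2 * (k:ℝ) * Real.pi) ^ 2) / (2 * v))
      ≤ (Real.sqrt (2 * Real.pi * a))⁻¹ *
        (Real.exp (x ^ 2 / (2 * b)) * Real.exp (-(Real.pi ^ 2 / b * (k : ℝ) ^ 2))) := by
        apply mul_le_mul h1 h2 (Real.exp_pos _).le (by positivity)

lemma summable_gauss {v : ℝ} (hv : 0 < v) (x : ℝ) :
    Summable fun k : ℤ => gaussDens v (x + 2 * (k : ℝ) * Real.pi) := by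
  apply Summable.of_nonneg_of_le (fun k => gaussDens_nonneg _ _)
    (fun k => gauss_term_le hv le_rfl le_rfl x k)
  exact (((summable_exp_neg_sq (by positivity : (0:ℝ) < Real.pi ^ 2 / v)).mul_left
    (Real.exp (x ^ 2 / (2 * v)))).mul_left _)

lemma fWN_nonneg (μ v θ : ℝ) : 0 ≤ fWN μ v θ :=
  tsum_nonneg fun k => gaussDens_nonneg _ _

lemma fWN_pos {v : ℝ} (hv : 0 < v) (μ θ : ℝ) : 0 < fWN μ v θ :=
  Summable.tsum_pos (summable_gauss hv (θ - μ)) (fun k => gaussDens_nonneg _ _) 0 (gaussDens_pos hv _)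

lemma fWN_shift (μ v θ : ℝ) (j : ℤ) : fWN (μ + 2 * (j : ℝ) * Real.pi) v θ = fWN μ v θ := by
  unfold fWN
  refine Eq.trans ?_ ((Equiv.subRight j).tsum_eq
    (fun k : ℤ => gaussDens v (θ - μ + 2 * (k : ℝ) * Real.pi)))
  congr 1
  funext k
  simp only [Equiv.subRight_apply]
  congr 1
  push_cast
  ring

lemma fWN_bound {V v : ℝ} (hV : 0 < V) (h1 : V / 2 ≤ v) (h2 : v ≤ V) (μ θ : ℝ) :
    fWN μ v θ ≤ (Real.sqrt (2 * Real.pi * (V / 2)))⁻¹ *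
      (Real.exp ((2 * Real.pi) ^ 2 / (2 * V)) *
        ∑' k : ℤ, Real.exp (-(Real.pi ^ 2 / V * (k : ℝ) ^ 2))) := by
  have hv : 0 < v := by linarith
  have hπ : 0 < Real.pi := Real.pi_pos
  set j : ℤ := ⌊(θ - μ) / (2 * Real.pi)⌋ with hj
  have hfl1 : (j : ℝ) ≤ (θ - μ) / (2 * Real.pi) := Int.floor_le _
  have hfl2 : (θ - μ) / (2 * Real.pi) < (j : ℝ) + 1 := Int.lt_floor_add_one _
  have hA : (j : ℝ) * (2 * Real.pi) ≤ θ - μ := (le_div_iff₀ (by positivity)).mp hfl1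
  have hB : θ - μ < ((j : ℝ) + 1) * (2 * Real.pi) := (div_lt_iff₀ (by positivity)).mp hfl2
  set x : ℝ := θ - (μ + 2 * (j : ℝ) * Real.pi) with hx
  have hx0 : 0 ≤ x := by simp only [hx]; nlinarith
  have hx2 : x ≤ 2 * Real.pi := by simp only [hx]; nlinarith
  have hrw : fWN μ v θ = fWN (μ + 2 * (j : ℝ) * Real.pi) v θ := (fWN_shift μ v θ j).symm
  rw [hrw]
  unfold fWN
  have hsum2 := (summable_exp_neg_sq (by positivity : (0:ℝ) < Real.pi ^ 2 / V))
  calc (∑' k : ℤ, gaussDens v (x + 2 * (k : ℝ) * Real.pi))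
      ≤ ∑' k : ℤ, (Real.sqrt (2 * Real.pi * (V / 2)))⁻¹ *
          (Real.exp (x ^ 2 / (2 * V)) * Real.exp (-(Real.pi ^ 2 / V * (k : ℝ) ^ 2))) := by
        refine Summable.tsum_le_tsum (fun k => gauss_term_le (by positivity) h1 h2 x k)
          (summable_gauss hv x) ?_
        exact (hsum2.mul_left _).mul_left _
    _ = (Real.sqrt (2 * Real.pi * (V / 2)))⁻¹ *
          (Real.exp (x ^ 2 / (2 * V)) * ∑' k : ℤ, Real.exp (-(Real.pi ^ 2 / V * (k : ℝ) ^ 2))) := by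
        rw [tsum_mul_left, tsum_mul_left]
    _ ≤ (Real.sqrt (2 * Real.pi * (V / 2)))⁻¹ *
          (Real.exp ((2 * Real.pi) ^ 2 / (2 * V)) *
            ∑' k : ℤ, Real.exp (-(Real.pi ^ 2 / V * (k : ℝ) ^ 2))) := by
        have hts : 0 ≤ ∑' k : ℤ, Real.exp (-(Real.pi ^ 2 / V * (k : ℝ) ^ 2)) :=
          tsum_nonneg fun k => (Real.exp_pos _).le
        have hxx : x ^ 2 ≤ (2 * Real.pi) ^ 2 := by nlinarith
        gcongr

lemma wnWeight_nonneg {α σ : ℝ} (hα : 0 < α) (hσ : 0 < σ) (μ : ℝ) (k : ℤ) (θ : ℝ) :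
    0 ≤ wnWeight α μ σ k θ :=
  div_nonneg (gaussDens_nonneg _ _) (fWN_pos (by positivity) _ _).le

lemma summable_wnWeight {α σ : ℝ} (hα : 0 < α) (hσ : 0 < σ) (μ θ : ℝ) :
    Summable fun k : ℤ => wnWeight α μ σ k θ :=
  (summable_gauss (by positivity) (θ - μ)).div_const _

lemma tsum_wnWeight {α σ : ℝ} (hα : 0 < α) (hσ : 0 < σ) (μ θ : ℝ) :
    ∑' k : ℤ, wnWeight α μ σ k θ = 1 := by
  unfold wnWeight
  rw [tsum_div_const]
  exact div_self (fWN_pos (by positivity : (0:ℝ) < σ ^ 2 / (2 * α)) μ θ).ne'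

lemma tendsto_exp_neg_mul {c : ℝ} (hc : 0 < c) :
    Tendsto (fun t : ℝ => Real.exp (-(c * t))) atTop (nhds 0) := by
  apply Real.tendsto_exp_atBot.comp
  exact tendsto_neg_atBot_iff.mpr (tendsto_const_mul_atTop_of_pos hc |>.mpr tendsto_id)

lemma tendsto_wouVar {α σ : ℝ} (hα : 0 < α) :
    Tendsto (fun t => wouVar α σ t) atTop (nhds (σ ^ 2 / (2 * α))) := by
  have hE : Tendsto (fun t : ℝ => Real.exp (-(2 * α * t))) atTop (nhds 0) :=
    tendsto_exp_neg_mul (by positivity)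
  have : Tendsto (fun t => σ ^ 2 * (1 - Real.exp (-(2 * α * t))) / (2 * α)) atTop
      (nhds (σ ^ 2 * (1 - 0) / (2 * α))) :=
    (tendsto_const_nhds.mul (tendsto_const_nhds.sub hE)).div_const _
  simpa [wouVar] using this

lemma tendsto_wouMean {α : ℝ} (hα : 0 < α) (μ θs : ℝ) (m : ℤ) :
    Tendsto (fun t => wouMean α μ t m θs) atTop (nhds μ) := by
  have hE : Tendsto (fun t : ℝ => Real.exp (-(α * t))) atTop (nhds 0) :=
    tendsto_exp_neg_mul hα
  have : Tendsto (fun t => μ + Real.exp (-(α * t)) * (θs - μ + 2 * (m : ℝ) * Real.pi)) atTop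
      (nhds (μ + 0 * (θs - μ + 2 * (m : ℝ) * Real.pi))) :=
    tendsto_const_nhds.add (hE.mul tendsto_const_nhds)
  simpa [wouMean] using this

lemma tendsto_gaussDens {V x₀ : ℝ} (hV : 0 < V) {γf xf : ℝ → ℝ}
    (hγ : Tendsto γf atTop (nhds V)) (hx : Tendsto xf atTop (nhds x₀)) :
    Tendsto (fun t => gaussDens (γf t) (xf t)) atTop (nhds (gaussDens V x₀)) := by
  unfold gaussDens
  have h1 : Tendsto (fun t => Real.sqrt (2 * Real.pi * γf t)) atTop
      (nhds (Real.sqrt (2 * Real.pi * V))) :=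
    (Real.continuous_sqrt.tendsto _).comp (tendsto_const_nhds.mul hγ)
  have h2 := h1.inv₀ (Real.sqrt_pos.mpr (by positivity)).ne'
  have h3 : Tendsto (fun t => -(xf t ^ 2) / (2 * γf t)) atTop
      (nhds (-(x₀ ^ 2) / (2 * V))) :=
    ((hx.pow 2).neg).div (tendsto_const_nhds.mul hγ) (by positivity)
  exact h2.mul ((Real.continuous_exp.tendsto _).comp h3)

lemma wouVar_le {α σ : ℝ} (hα : 0 < α) (t : ℝ) : wouVar α σ t ≤ σ ^ 2 / (2 * α) := by
  unfold wouVar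
  gcongr
  nlinarith [Real.exp_pos (-(2 * α * t)), sq_nonneg σ]

lemma tendsto_fWN_inner {α σ : ℝ} (hα : 0 < α) (hσ : 0 < σ) (μ θ θs : ℝ) (m : ℤ) :
    Tendsto (fun t => fWN (wouMean α μ t m θs) (wouVar α σ t) θ) atTop
      (nhds (fWN μ (σ ^ 2 / (2 * α)) θ)) := by
  set V : ℝ := σ ^ 2 / (2 * α) with hVdef
  have hV : 0 < V := by positivity
  set R : ℝ := |θ - μ| + |θs - μ + 2 * (m : ℝ) * Real.pi| with hR
  unfold fWN
  apply tendsto_tsum_of_dominated_convergence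
    (bound := fun k : ℤ => (Real.sqrt (2 * Real.pi * (V / 2)))⁻¹ *
      (Real.exp (R ^ 2 / (2 * V)) * Real.exp (-(Real.pi ^ 2 / V * (k : ℝ) ^ 2))))
  · exact ((summable_exp_neg_sq (by positivity : (0:ℝ) < Real.pi ^ 2 / V)).mul_left _).mul_left _
  · intro k
    exact tendsto_gaussDens hV (tendsto_wouVar hα)
      ((tendsto_const_nhds.sub (tendsto_wouMean hα μ θs m)).add tendsto_const_nhds)
  · have hγ : ∀ᶠ t in atTop, V / 2 ≤ wouVar α σ t :=
      (tendsto_wouVar hα (σ := σ)).eventually (eventually_ge_nhds (by linarith))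
    filter_upwards [hγ, eventually_ge_atTop (0 : ℝ)] with t ht ht0
    intro k
    rw [Real.norm_eq_abs, abs_of_nonneg (gaussDens_nonneg _ _)]
    have hxt : |θ - wouMean α μ t m θs| ≤ R := by
      unfold wouMean
      have he1 : Real.exp (-(α * t)) ≤ 1 := by
        rw [← Real.exp_zero]; apply Real.exp_le_exp.mpr; nlinarith
      have he0 : 0 < Real.exp (-(α * t)) := Real.exp_pos _
      calc |θ - (μ + Real.exp (-(α * t)) * (θs - μ + 2 * (m : ℝ) * Real.pi))|
          = |(θ - μ) - Real.exp (-(α * t)) * (θs - μ + 2 * (m : ℝ) * Real.pi)| := by ring_nf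
        _ ≤ |θ - μ| + |Real.exp (-(α * t)) * (θs - μ + 2 * (m : ℝ) * Real.pi)| :=
            abs_sub _ _
        _ ≤ R := by
            rw [abs_mul, abs_of_pos he0, hR]
            have := abs_nonneg (θs - μ + 2 * (m : ℝ) * Real.pi)
            nlinarith
    calc gaussDens (wouVar α σ t) (θ - wouMean α μ t m θs + 2 * (k : ℝ) * Real.pi)
        ≤ (Real.sqrt (2 * Real.pi * (V / 2)))⁻¹ *
            (Real.exp ((θ - wouMean α μ t m θs) ^ 2 / (2 * V)) *
              Real.exp (-(Real.pi ^ 2 / V * (k : ℝ) ^ 2))) :=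
          gauss_term_le (by positivity) ht (wouVar_le hα t) _ k
      _ ≤ (Real.sqrt (2 * Real.pi * (V / 2)))⁻¹ *
            (Real.exp (R ^ 2 / (2 * V)) * Real.exp (-(Real.pi ^ 2 / V * (k : ℝ) ^ 2))) := by
          have hsq2 : (θ - wouMean α μ t m θs) ^ 2 ≤ R ^ 2 := by
            rw [← sq_abs (θ - wouMean α μ t m θs)]
            exact pow_le_pow_left₀ (abs_nonneg _) hxt 2
          apply mul_le_mul_of_nonneg_left ?_ (by positivity)
          apply mul_le_mul_of_nonneg_right ?_ (Real.exp_pos _).le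
          exact Real.exp_le_exp.mpr ((div_le_div_iff_of_pos_right (by positivity)).mpr hsq2)

/-- Stationary-distribution correctness: the WOU conditional density converges
pointwise to the stationary wrapped normal density as `t → ∞`. -/
theorem pWOU_tendsto_stationary (α μ σ : ℝ) (hα : 0 < α) (hσ : 0 < σ)
    (θ θs : ℝ) :
    Filter.Tendsto (fun t : ℝ => pWOU α μ σ t θ θs) Filter.atTop
      (nhds (fWN μ (σ ^ 2 / (2 * α)) θ)) := by
  set V : ℝ := σ ^ 2 / (2 * α) with hVdef
  have hV : 0 < V := by positivity
  set B : ℝ := (Real.sqrt (2 * Real.pi * (V / 2)))⁻¹ *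
      (Real.exp ((2 * Real.pi) ^ 2 / (2 * V)) *
        ∑' k : ℤ, Real.exp (-(Real.pi ^ 2 / V * (k : ℝ) ^ 2))) with hB
  have hmain : Tendsto (fun t : ℝ => ∑' m : ℤ,
      wnWeight α μ σ m θs * fWN (wouMean α μ t m θs) (wouVar α σ t) θ) atTop
      (nhds (∑' m : ℤ, wnWeight α μ σ m θs * fWN μ V θ)) := by
    apply tendsto_tsum_of_dominated_convergence
      (bound := fun m : ℤ => wnWeight α μ σ m θs * B)
    · exact (summable_wnWeight hα hσ μ θs).mul_right B
    · intro m
      exact tendsto_const_nhds.mul (tendsto_fWN_inner hα hσ μ θ θs m)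
    · have hγ : ∀ᶠ t in atTop, V / 2 ≤ wouVar α σ t :=
        (tendsto_wouVar hα (σ := σ)).eventually (eventually_ge_nhds (by linarith))
      filter_upwards [hγ] with t ht
      intro m
      rw [Real.norm_eq_abs, abs_of_nonneg (mul_nonneg (wnWeight_nonneg hα hσ μ m θs)
        (fWN_nonneg _ _ _))]
      exact mul_le_mul_of_nonneg_left (fWN_bound hV ht (wouVar_le hα t) _ _)
        (wnWeight_nonneg hα hσ μ m θs)
  have hsum : (∑' m : ℤ, wnWeight α μ σ m θs * fWN μ V θ) = fWN μ V θ := by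
    rw [tsum_mul_right, tsum_wnWeight hα hσ μ θs, one_mul]
  rw [← hsum]
  exact hmain
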